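/- Let f : [a,b] → ℝ be a convex function on [a,b]. Then for every x ∈ [a,b]: (x−a)·f(a) + (b−x)·f(b) − ∫_a^b f(t) dt ≤ (1/2)·[ (b−x)²·f′₋(b) − (x−a)²·f′₊(a) ], where f′₊(a) is the right derivative of f at a and f′₋(b) is the left derivative of f at b (assumed finite). -/

import Mathlib

open MeasureTheory Set intervalIntegral

/-- **Upper bound in the generalised trapezoid inequality for convex functions**
(Theorem 3): for a convex `f : [a,b] → ℝ` with finite right derivative `A` at `a`
and finite left derivative `B` at `b`, for every `x ∈ [a,b]`,
`(x−a)f(a) + (b−x)f(b) − ∫_a^b f ≤ (1/2)[(b−x)² f′₋(b) − (x−a)² f′₊(a)]`. -/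
theorem trapezoid_convex_upper_bound
    (a b : ℝ) (hab : a < b) (f : ℝ → ℝ)
    (hf : ConvexOn ℝ (Set.Icc a b) f) (A B : ℝ)
    (hA : HasDerivWithinAt f A (Set.Ici a) a)
    (hB : HasDerivWithinAt f B (Set.Iic b) b)
    (x : ℝ) (hx : x ∈ Set.Icc a b) :
    (x - a) * f a + (b - x) * f b - (∫ t in a..b, f t) ≤
      (1 / 2) * ((b - x) ^ 2 * B - (x - a) ^ 2 * A) := by
  obtain ⟨hax, hxb⟩ := hx
  have ha : a ∈ Set.Icc a b := ⟨le_rfl, hab.le⟩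
  have hb : b ∈ Set.Icc a b := ⟨hab.le, le_rfl⟩
  -- tangent line lower bounds
  have hg1 : ∀ t ∈ Set.Icc a b, f a + A * (t - a) ≤ f t := by
    intro t ht
    rcases eq_or_lt_of_le ht.1 with h | h
    · simp [← h]
    · have := hf.le_slope_of_hasDerivWithinAt_Ioi ha ht h
        (hA.mono Ioi_subset_Ici_self)
      rw [slope_def_field] at this
      have ht' : (0:ℝ) < t - a := by linarith
      rw [le_div_iff₀ ht'] at this
      nlinarith
  have hg2 : ∀ t ∈ Set.Icc a b, f b + B * (t - b) ≤ f t := by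
    intro t ht
    rcases eq_or_lt_of_le ht.2 with h | h
    · simp [h]
    · have := hf.slope_le_of_hasDerivWithinAt_Iio ht hb h
        (hB.mono Iio_subset_Iic_self)
      rw [slope_def_field] at this
      have ht' : (0:ℝ) < b - t := by linarith
      rw [div_le_iff₀ ht'] at this
      nlinarith
  -- upper bound by chord
  have hub : ∀ t ∈ Set.Icc a b, f t ≤ max (f a) (f b) := by
    intro t ht
    have : t ∈ segment ℝ a b := by rwa [segment_eq_Icc hab.le]
    exact hf.le_on_segment ha hb this
  -- integrability
  have hmeas : MeasurableSet (Set.Icc a b) := measurableSet_Icc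
  have hcont : ContinuousOn f (Set.Ioo a b) :=
    (hf.subset Set.Ioo_subset_Icc_self (convex_Ioo a b)).continuousOn isOpen_Ioo
  have hint : IntegrableOn f (Set.Icc a b) := by
    rw [integrableOn_Icc_iff_integrableOn_Ioo]
    refine ⟨hcont.aestronglyMeasurable measurableSet_Ioo,
      HasFiniteIntegral.restrict_of_bounded (C := |f a| + |f b| + |A| * (b - a))
        measure_Ioo_lt_top ?_⟩
    filter_upwards [ae_restrict_mem measurableSet_Ioo] with t ht
    have h1 := hg1 t (Ioo_subset_Icc_self ht)
    have h2 := hub t (Ioo_subset_Icc_self ht)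
    rw [Real.norm_eq_abs, abs_le]
    constructor
    · have : -(|A| * (b - a)) ≤ A * (t - a) := by
        have h3 : |A * (t - a)| ≤ |A| * (b - a) := by
          rw [abs_mul]
          gcongr
          rw [abs_le]; constructor <;> [linarith [ht.1, ht.2]; linarith [ht.1, ht.2]]
        linarith [neg_abs_le (A * (t - a))]
      linarith [neg_abs_le (f a), abs_nonneg (f b)]
    · have := le_max_iff.mp h2
      rcases this with h | h
      · nlinarith [le_abs_self (f a), abs_nonneg (f b), abs_nonneg A]
      · nlinarith [le_abs_self (f b), abs_nonneg (f a), abs_nonneg A]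
  have hi1 : IntervalIntegrable f volume a x := by
    rw [intervalIntegrable_iff_integrableOn_Icc_of_le hax]
    exact hint.mono_set (Icc_subset_Icc le_rfl hxb)
  have hi2 : IntervalIntegrable f volume x b := by
    rw [intervalIntegrable_iff_integrableOn_Icc_of_le hxb]
    exact hint.mono_set (Icc_subset_Icc hax le_rfl)
  -- lower bounds on the two pieces of the integral
  have e1 : (∫ t in a..x, (f a + A * (t - a))) = (x - a) * f a + A * (x - a)^2 / 2 := by
    have : ∀ t ∈ Set.uIcc a x, HasDerivAt (fun t => f a * t + A * (t - a)^2 / 2)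
        (f a + A * (t - a)) t := by
      intro t _
      have h1 : HasDerivAt (fun t : ℝ => f a * t) (f a) t := by
        simpa using (hasDerivAt_id t).const_mul (f a)
      have h2 : HasDerivAt (fun t : ℝ => A * (t - a)^2 / 2) (A * (t - a)) t := by
        have : HasDerivAt (fun t : ℝ => (t - a)^2) (2 * (t - a)) t := by
          simpa using ((hasDerivAt_id t).sub_const a).fun_pow 2
        have := (this.const_mul A).div_const 2
        convert this using 1; rfl; rfl; ring
      simpa using h1.fun_add h2
    rw [intervalIntegral.integral_eq_sub_of_hasDerivAt this]
    · ring
    · exact (continuous_const.add (continuous_const.mul (continuous_id.sub continuous_const))).intervalIntegrable _ _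
  have e2 : (∫ t in x..b, (f b + B * (t - b))) = (b - x) * f b - B * (b - x)^2 / 2 := by
    have : ∀ t ∈ Set.uIcc x b, HasDerivAt (fun t => f b * t + B * (t - b)^2 / 2)
        (f b + B * (t - b)) t := by
      intro t _
      have h1 : HasDerivAt (fun t : ℝ => f b * t) (f b) t := by
        simpa using (hasDerivAt_id t).const_mul (f b)
      have h2 : HasDerivAt (fun t : ℝ => B * (t - b)^2 / 2) (B * (t - b)) t := by
        have : HasDerivAt (fun t : ℝ => (t - b)^2) (2 * (t - b)) t := by
          simpa using ((hasDerivAt_id t).sub_const b).fun_pow 2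
        have := (this.const_mul B).div_const 2
        convert this using 1; rfl; rfl; ring
      simpa using h1.fun_add h2
    rw [intervalIntegral.integral_eq_sub_of_hasDerivAt this]
    · ring
    · exact (continuous_const.add (continuous_const.mul (continuous_id.sub continuous_const))).intervalIntegrable _ _
  have ib1 : (x - a) * f a + A * (x - a)^2 / 2 ≤ ∫ t in a..x, f t := by
    rw [← e1]
    apply intervalIntegral.integral_mono_on hax _ hi1
    · intro t ht
      exact hg1 t ⟨ht.1, ht.2.trans hxb⟩
    · exact (continuous_const.add (continuous_const.mul (continuous_id.sub continuous_const))).intervalIntegrable _ _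
  have ib2 : (b - x) * f b - B * (b - x)^2 / 2 ≤ ∫ t in x..b, f t := by
    rw [← e2]
    apply intervalIntegral.integral_mono_on hxb _ hi2
    · intro t ht
      exact hg2 t ⟨hax.trans ht.1, ht.2⟩
    · exact (continuous_const.add (continuous_const.mul (continuous_id.sub continuous_const))).intervalIntegrable _ _
  have hsplit : (∫ t in a..b, f t) = (∫ t in a..x, f t) + ∫ t in x..b, f t :=
    (intervalIntegral.integral_add_adjacent_intervals hi1 hi2).symm
  rw [hsplit]
  nlinarith [ib1, ib2]
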